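/- If the structure group G(X,◁) of a finite quandle (X,◁) is abelian, then (X,◁) is an abelian quandle, i.e. (a◁b)◁c = (a◁c)◁b for all a,b,c ∈ X. -/

import Mathlib

variable {X : Type*}

/-- Quandle axioms for a binary operation `op` (right-translation convention):
self-distributivity, bijectivity of right translations, idempotence. -/
structure IsQuandleOp (op : X → X → X) : Prop where
  sd : ∀ a b c, op (op a b) c = op (op a c) (op b c)
  bij : ∀ b, Function.Bijective fun a => op a b
  idem : ∀ a, op a a = a

/-- A quandle operation is abelian if `(a ◁ b) ◁ c = (a ◁ c) ◁ b`. -/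
def IsAbelianOp (op : X → X → X) : Prop :=
  ∀ a b c, op (op a b) c = op (op a c) b

/-- The relators `g_a g_b (g_b g_{a ◁ b})⁻¹` of the structure group. -/
def structureRels (op : X → X → X) : Set (FreeGroup X) :=
  {w | ∃ a b : X,
    w = FreeGroup.of a * FreeGroup.of b * (FreeGroup.of b * FreeGroup.of (op a b))⁻¹}

/-- The structure group `⟨g_a, a ∈ X | g_a g_b = g_b g_{a ◁ b}⟩` of a quandle. -/
abbrev StructureGroup (op : X → X → X) : Type _ := PresentedGroup (structureRels op)

/-- If the structure group of a finite quandle is abelian,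
then the quandle is abelian. -/
theorem abelian_of_abelian_structureGroup {X : Type*} [Finite X] (op : X → X → X)
    (hq : IsQuandleOp op)
    (hcomm : ∀ g h : StructureGroup op, g * h = h * g) :
    IsAbelianOp op := by
  classical
  intro a b c
  -- permutation given by right translation
  let e : X → Equiv.Perm X := fun d => Equiv.ofBijective _ (hq.bij d)
  let f : X → Equiv.Perm X := fun d => (e d)⁻¹
  have hrel : ∀ r ∈ structureRels op, FreeGroup.lift f r = 1 := by
    rintro r ⟨u, v, rfl⟩
    have key : e v * e u = e (op u v) * e v := by
      ext x
      exact hq.sd x u v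
    have : f u * f v = f v * f (op u v) := by
      show (e u)⁻¹ * (e v)⁻¹ = (e v)⁻¹ * (e (op u v))⁻¹
      rw [← mul_inv_rev, ← mul_inv_rev, key]
    simp [this]
  let φ : StructureGroup op →* Equiv.Perm X := PresentedGroup.toGroup hrel
  have hφ : ∀ d : X, φ (PresentedGroup.of d) = f d := fun d => PresentedGroup.toGroup.of hrel
  have hc : ∀ u v : X, f u * f v = f v * f u := by
    intro u v
    have := hcomm (PresentedGroup.of u) (PresentedGroup.of v)
    have := congrArg φ this
    simpa [map_mul, hφ] using this
  have hc' : ∀ u v : X, e u * e v = e v * e u := by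
    intro u v
    have h := hc u v
    simp only [f, ← mul_inv_rev] at h
    have := congrArg (·⁻¹) h
    simpa using this.symm
  have := congrFun (congrArg (fun g : Equiv.Perm X => (g : X → X)) (hc' c b)) a
  simpa [e, Equiv.ofBijective, Equiv.Perm.mul_apply] using this
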